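/- Let M be a map with flag set F and generators s0, s1, s2. Let the dual M* be the map on F with generators s*_i = s_{2-i}, let r*_0, r*_1, r*_2 be the truncation generators of Tr(M*) on F × {0,1,2}, and let r'_0, r'_1, r'_2 be the leapfrog generators of Le(M) on F × {0,1,2}. Then the bijection θ of F × {0,1,2} given by θ(Φ, i) = (Φ, i+1 mod 3) satisfies θ ∘ r'_j = r*_j ∘ θ for each j = 0,1,2; hence Le(M) is isomorphic, by a colour-preserving isomorphism of flag graphs, to Tr(M*). -/
import Mathlib

/-- the bijection θ(Φ,i) = (Φ, i+1 mod 3) intertwines the leapfrog generators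
of Le(M) with the truncation generators of Tr(M*); hence Le(M) ≅ Tr(M*) by a
colour-preserving isomorphism of flag graphs. -/
theorem leapfrog_iso_truncation_of_dual
    {F : Type*} [Fintype F] [Nonempty F]
    (s0 s1 s2 : Equiv.Perm F)
    (hs0i : s0 * s0 = 1) (hs0f : ∀ x, s0 x ≠ x)
    (hs1i : s1 * s1 = 1) (hs1f : ∀ x, s1 x ≠ x)
    (hs2i : s2 * s2 = 1) (hs2f : ∀ x, s2 x ≠ x)
    (hcomm : s0 * s2 = s2 * s0)
    (hs02i : (s0 * s2) * (s0 * s2) = 1) (hs02f : ∀ x, (s0 * s2) x ≠ x)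
    (htrans : ∀ x y : F, ∃ g ∈ Subgroup.closure ({s0, s1, s2} : Set (Equiv.Perm F)), g x = y)
    -- truncation generators of the dual map M* (whose generators are s*_i = s_{2-i})
    (rs0 rs1 rs2 : Equiv.Perm (F × Fin 3))
    (hrs0 : ∀ Φ : F, rs0 (Φ, 0) = (s1 Φ, 0) ∧ rs0 (Φ, 1) = (s2 Φ, 1) ∧ rs0 (Φ, 2) = (s1 Φ, 2))
    (hrs1 : ∀ Φ : F, rs1 (Φ, 0) = (s0 Φ, 0) ∧ rs1 (Φ, 1) = (Φ, 2) ∧ rs1 (Φ, 2) = (Φ, 1))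
    (hrs2 : ∀ Φ : F, rs2 (Φ, 0) = (Φ, 2) ∧ rs2 (Φ, 1) = (s0 Φ, 1) ∧ rs2 (Φ, 2) = (Φ, 0))
    -- leapfrog generators of Le(M)
    (l0 l1 l2 : Equiv.Perm (F × Fin 3))
    (hl0 : ∀ Φ : F, l0 (Φ, 0) = (s2 Φ, 0) ∧ l0 (Φ, 1) = (s1 Φ, 1) ∧ l0 (Φ, 2) = (s1 Φ, 2))
    (hl1 : ∀ Φ : F, l1 (Φ, 0) = (Φ, 1) ∧ l1 (Φ, 1) = (Φ, 0) ∧ l1 (Φ, 2) = (s0 Φ, 2))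
    (hl2 : ∀ Φ : F, l2 (Φ, 0) = (s0 Φ, 0) ∧ l2 (Φ, 1) = (Φ, 2) ∧ l2 (Φ, 2) = (Φ, 1))
    (θ : Equiv.Perm (F × Fin 3))
    (hθ : ∀ (Φ : F) (i : Fin 3), θ (Φ, i) = (Φ, i + 1)) :
    θ * l0 = rs0 * θ ∧ θ * l1 = rs1 * θ ∧ θ * l2 = rs2 * θ := by
  refine ⟨?_, ?_, ?_⟩ <;>
  · apply Equiv.ext
    rintro ⟨Φ, i⟩
    fin_cases i <;>
      simp [Equiv.Perm.mul_apply, hθ, (hl0 Φ).1, (hl0 Φ).2.1, (hl0 Φ).2.2,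
        (hl1 Φ).1, (hl1 Φ).2.1, (hl1 Φ).2.2, (hl2 Φ).1, (hl2 Φ).2.1, (hl2 Φ).2.2,
        (hrs0 Φ).1, (hrs0 Φ).2.1, (hrs0 Φ).2.2, (hrs1 Φ).1, (hrs1 Φ).2.1, (hrs1 Φ).2.2,
        (hrs2 Φ).1, (hrs2 Φ).2.1, (hrs2 Φ).2.2,
        (hrs0 (s2 Φ)).1, (hrs0 (s1 Φ)).2.1, (hrs0 (s1 Φ)).2.2,
        (hrs1 (s0 Φ)), (hrs2 (s0 Φ)),
        show (0:Fin 3)+1 = 1 from rfl, show (1:Fin 3)+1 = 2 from rfl, show (2:Fin 3)+1 = 0 from rfl]
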